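/- Let β ∈ (0,1] and a, c ∈ ℝ with a > 0. Define f(x) = a·x^β + c on [0,1]. Then for every nonnegative integer l, the bin B₀ = [0, 2^{-l}] satisfies |∫_{B₀} f(x)·2^l dx − f(0)| ≥ (a/(β+1))·2^{−βl}. In particular, the maximum over bins B ∈ 𝓑_l of sup_{x∈B} |Γ⁰f(x;B) − f(x)| is at least (a/(β+1))·2^{−βl}, where Γ⁰f(·;B) is the constant equal to the average of f over B under the uniform distribution. -/

import Mathlib

open Real MeasureTheory intervalIntegral

theorem stmt0_key (β a c : ℝ) (hβ0 : 0 < β) (ha : 0 < a) (l : ℕ) :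
    (a / (β + 1)) * (2 : ℝ) ^ (-(β * l)) ≤
      |(2 : ℝ) ^ (l : ℝ) * (∫ x in (0 : ℝ)..((2 : ℝ) ^ (-(l : ℝ))), (a * x ^ β + c)) -
        (a * (0 : ℝ) ^ β + c)| := by
  set h : ℝ := (2 : ℝ) ^ (-(l : ℝ)) with hh
  have hβ1' : 0 < β + 1 := by linarith
  have hint : (∫ x in (0 : ℝ)..h, (a * x ^ β + c))
      = a * (h ^ (β + 1) / (β + 1)) + c * h := by
    rw [intervalIntegral.integral_add
        ((intervalIntegrable_rpow (by left; linarith)).const_mul a)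
        intervalIntegrable_const,
      intervalIntegral.integral_const_mul, integral_rpow (by left; linarith),
      intervalIntegral.integral_const]
    rw [Real.zero_rpow (by positivity), smul_eq_mul]
    ring
  rw [hint]
  have h0 : (0:ℝ) ^ β = 0 := Real.zero_rpow hβ0.ne'
  have hpow : (2:ℝ) ^ (l:ℝ) * h ^ (β+1) = (2:ℝ) ^ (-(β*l)) := by
    rw [hh, ← Real.rpow_mul (by norm_num), ← Real.rpow_add two_pos]
    congr 1
    ring
  have hch : (2:ℝ) ^ (l:ℝ) * (c * h) = c := by
    rw [hh, mul_comm c, ← mul_assoc, ← Real.rpow_add two_pos]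
    simp
  have e : (2:ℝ)^(l:ℝ) * (a * (h ^ (β + 1) / (β + 1)))
      = a/(β+1) * ((2:ℝ)^(l:ℝ) * h^(β+1)) := by ring
  have : (2:ℝ) ^ (l:ℝ) * (a * (h ^ (β + 1) / (β + 1)) + c * h) - (a * (0:ℝ) ^ β + c)
      = (a / (β+1)) * (2:ℝ) ^ (-(β*l)) := by
    rw [h0, mul_add, hch, e, hpow]
    ring
  rw [this, abs_of_nonneg (by positivity)]

/-- the function `f x = a * x ^ β + c` is self-similar under the uniform
distribution on `[0,1]` with parameters `l₀ = 0` and `b = a / (β + 1)`: on the bin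
`B₀ = [0, 2^{-l}]` the constant approximation error at `0` is at least `(a/(β+1)) 2^{-βl}`,
and in particular some bin `B ∈ 𝓑_l` contains a point witnessing the lower bound. -/
theorem stmt0 (β a c : ℝ) (hβ0 : 0 < β) (hβ1 : β ≤ 1) (ha : 0 < a) (l : ℕ) :
    (a / (β + 1)) * (2 : ℝ) ^ (-(β * l)) ≤
      |(2 : ℝ) ^ (l : ℝ) * (∫ x in (0 : ℝ)..((2 : ℝ) ^ (-(l : ℝ))), (a * x ^ β + c)) -
        (a * (0 : ℝ) ^ β + c)| ∧
    ∃ k : Fin (2 ^ l),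
      ∃ x ∈ Set.Icc ((k : ℝ) * (2 : ℝ) ^ (-(l : ℝ))) (((k : ℝ) + 1) * (2 : ℝ) ^ (-(l : ℝ))),
        (a / (β + 1)) * (2 : ℝ) ^ (-(β * l)) ≤
          |(2 : ℝ) ^ (l : ℝ) *
              (∫ y in ((k : ℝ) * (2 : ℝ) ^ (-(l : ℝ)))..(((k : ℝ) + 1) * (2 : ℝ) ^ (-(l : ℝ))),
                (a * y ^ β + c)) - (a * x ^ β + c)| := by
  refine ⟨stmt0_key β a c hβ0 ha l, ⟨0, pow_pos two_pos l⟩, 0, ?_, ?_⟩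
  · constructor
    · simp
    · positivity
  · simpa using stmt0_key β a c hβ0 ha l
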